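/- Let X = lim S, where S = (X_α, r^β_α, ω₁) is a continuous inverse sequence indexed by the first uncountable ordinal ω₁ such that each X_α is a compact metrizable space and each successor bonding map r^{α+1}_α : X_{α+1} → X_α is a retraction. Then X is Valdivia compact. -/

import Mathlib

open Set Filter Topology

universe u

/-- A continuous inverse sequence over a well-ordered index set `ι` (representing an
ordinal): continuous surjective bonding maps with identity and composition laws,
such that at every limit point `δ` of `ι` the map `X δ → Π_{α<δ} X α` is injective. -/
structure IsContInvSeq {ι : Type*} [LinearOrder ι] {X : ι → Type*}
    [∀ α, TopologicalSpace (X α)]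
    (r : ∀ ⦃α β : ι⦄, α ≤ β → X β → X α) : Prop where
  continuous : ∀ ⦃α β : ι⦄ (h : α ≤ β), Continuous (r h)
  surjective : ∀ ⦃α β : ι⦄ (h : α ≤ β), Function.Surjective (r h)
  map_id : ∀ (α : ι) (x : X α), r (le_refl α) x = x
  map_comp : ∀ ⦃α β γ : ι⦄ (h₁ : α ≤ β) (h₂ : β ≤ γ) (x : X γ),
    r h₁ (r h₂ x) = r (h₁.trans h₂) x
  limit_inj : ∀ δ : ι, (∃ α, α < δ) → (∀ α, α < δ → ∃ β, α < β ∧ β < δ) →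
    ∀ x y : X δ, (∀ (α : ι) (h : α < δ), r h.le x = r h.le y) → x = y

/-- The limit of an inverse sequence: the space of threads, a subspace of the
product `Π α, X α`. -/
abbrev InvLim {ι : Type*} [LinearOrder ι] {X : ι → Type*}
    [∀ α, TopologicalSpace (X α)]
    (r : ∀ ⦃α β : ι⦄, α ≤ β → X β → X α) : Type _ :=
  {x : ∀ α, X α // ∀ ⦃α β : ι⦄ (h : α ≤ β), r h (x β) = x α}

/-- A continuous surjection which admits a continuous right inverse. -/
def IsRetraction {X Y : Type*} [TopologicalSpace X] [TopologicalSpace Y]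
    (f : X → Y) : Prop :=
  Continuous f ∧ Function.Surjective f ∧ ∃ g : Y → X, Continuous g ∧ f ∘ g = id

/-- `Σ(T)`: the points of the Tikhonov cube `[0,1]^T` with countable support. -/
def SigmaProd (T : Type*) : Set (T → unitInterval) :=
  {x | {t | x t ≠ 0}.Countable}

/-- A Valdivia embedding into the cube `[0,1]^T`. -/
def IsValdiviaEmbedding {X : Type*} [TopologicalSpace X] {T : Type*}
    (h : X → T → unitInterval) : Prop :=
  Topology.IsEmbedding h ∧ Set.range h = closure (Set.range h ∩ SigmaProd T)

/-- A space is Valdivia compact if it admits a Valdivia embedding into some cube. -/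
def IsValdivia (X : Type u) [TopologicalSpace X] : Prop :=
  ∃ (T : Type u) (h : X → T → unitInterval), IsValdiviaEmbedding h


section ValdiviaAux

/-- A compact metrizable space admits a countable separating family of continuous
maps into the unit interval. -/
lemma exists_sep_family (Y : Type*) [TopologicalSpace Y] [CompactSpace Y]
    [TopologicalSpace.MetrizableSpace Y] :
    ∃ f : ℕ → Y → unitInterval, (∀ n, Continuous (f n)) ∧
      ∀ a b : Y, (∀ n, f n a = f n b) → a = b := by
  letI : MetricSpace Y := TopologicalSpace.metrizableSpaceMetric Y
  rcases isEmpty_or_nonempty Y with hY | hY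
  · exact ⟨fun _ _ => 0, fun _ => continuous_const, fun a => (IsEmpty.false a).elim⟩
  · obtain ⟨p, hp⟩ := TopologicalSpace.exists_dense_seq Y
    refine ⟨fun n y => ⟨min 1 (dist y (p n)), le_min zero_le_one dist_nonneg, min_le_left _ _⟩,
      fun n => Continuous.subtype_mk (by fun_prop) _, fun a b hab => ?_⟩
    by_contra hne
    have hd : 0 < dist a b := dist_pos.2 hne
    set ε : ℝ := min 1 (dist a b) / 2 with hε
    have hε0 : 0 < ε := by positivity
    obtain ⟨n, hn⟩ : ∃ n, dist a (p n) < ε := hp.exists_dist_lt a hε0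
    have h1 : min 1 (dist a (p n)) < ε := lt_of_le_of_lt (min_le_right _ _) hn
    have h2 : ε ≤ min 1 (dist b (p n)) := by
      have hdb : ε ≤ dist b (p n) := by
        calc ε ≤ min 1 (dist a b) - ε := by
                  have : 2 * ε ≤ min 1 (dist a b) := by
                    rw [hε]; ring_nf; linarith [min_le_right 1 (dist a b)]
                  linarith
          _ ≤ dist a b - dist a (p n) := by
                  have : min 1 (dist a b) ≤ dist a b := min_le_right _ _
                  linarith [hn.le]
          _ ≤ dist b (p n) := by
                  have h4 := dist_triangle a (p n) b
                  rw [dist_comm (p n) b] at h4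
                  linarith
      have hε1 : ε ≤ 1 := by
        rw [hε]; linarith [min_le_left 1 (dist a b)]
      exact le_min hε1 hdb
    have := congrArg Subtype.val (hab n)
    simp only at this
    linarith [this ▸ h1]

variable {ι : Type*} [LinearOrder ι] {X : ι → Type*} [∀ α, TopologicalSpace (X α)]
  {r : ∀ ⦃α β : ι⦄, α ≤ β → X β → X α}

/-- The limit of an inverse sequence of compact Hausdorff spaces is compact. -/
lemma invLim_compactSpace (hseq : IsContInvSeq r) [∀ α, T2Space (X α)]
    [∀ α, CompactSpace (X α)] : CompactSpace (InvLim r) := by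
  have hset : {x : ∀ α, X α | ∀ ⦃α β : ι⦄ (h : α ≤ β), r h (x β) = x α}
      = ⋂ (α : ι) (β : ι) (h : α ≤ β), {x : ∀ α, X α | r h (x β) = x α} := by
    ext x
    simp only [mem_setOf_eq, mem_iInter]
  have hcl : IsClosed {x : ∀ α, X α | ∀ ⦃α β : ι⦄ (h : α ≤ β), r h (x β) = x α} := by
    rw [hset]
    exact isClosed_iInter fun α => isClosed_iInter fun β => isClosed_iInter fun h =>
      isClosed_eq ((hseq.continuous h).comp (continuous_apply β)) (continuous_apply α)
  exact isCompact_iff_compactSpace.mp hcl.isCompact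

lemma invLim_nonempty_fiber (hseq : IsContInvSeq r) {δ : ι} (u : X δ) (c : ι) :
    Nonempty (X c) := by
  rcases le_total c δ with h | h
  · exact ⟨r h u⟩
  · rcases hseq.surjective h u with ⟨w, -⟩
    exact ⟨w⟩

/-- Every point of a coordinate space extends to a full thread of the limit. -/
lemma exists_thread (hseq : IsContInvSeq r) [∀ α, T2Space (X α)]
    [∀ α, CompactSpace (X α)] {δ : ι} (u : X δ) :
    ∃ z : InvLim r, z.1 δ = u := by
  haveI : ∀ c, Nonempty (X c) := fun c => invLim_nonempty_fiber hseq u c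
  set Z : Finset ι → Set (∀ α, X α) := fun F =>
    {z | z δ = u ∧ ∀ c ∈ F, ∀ c' ∈ F, ∀ h : c ≤ c', r h (z c') = z c} with hZ
  have hne : ∀ F, (Z F).Nonempty := by
    intro F
    have hmem : δ ∈ insert δ F := Finset.mem_insert_self δ F
    set m := (insert δ F).max' ⟨δ, hmem⟩ with hm
    have hδm : δ ≤ m := Finset.le_max' _ _ hmem
    have hFm : ∀ c ∈ F, c ≤ m := fun c hc =>
      Finset.le_max' _ _ (Finset.mem_insert_of_mem hc)
    obtain ⟨w, hw⟩ := hseq.surjective hδm u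
    refine ⟨fun c => if h : c ≤ m then r h w else Classical.arbitrary _, ?_, ?_⟩
    · simp only [dif_pos hδm, hw]
    · intro c hc c' hc' h
      simp only [dif_pos (hFm c' hc'), dif_pos (hFm c hc)]
      exact hseq.map_comp h (hFm c' hc') w
  have hcl : ∀ F, IsClosed (Z F) := by
    intro F
    have : Z F = {z : ∀ α, X α | z δ = u} ∩
        ⋂ (c ∈ F) (c' ∈ F) (h : c ≤ c'), {z : ∀ α, X α | r h (z c') = z c} := by
      ext z; simp only [hZ, mem_setOf_eq, mem_inter_iff, mem_iInter]
    rw [this]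
    refine (isClosed_eq (continuous_apply δ) continuous_const).inter ?_
    exact isClosed_iInter fun c => isClosed_iInter fun _ => isClosed_iInter fun c' =>
      isClosed_iInter fun _ => isClosed_iInter fun h =>
        isClosed_eq ((hseq.continuous h).comp (continuous_apply c')) (continuous_apply c)
  have hdir : Directed (· ⊇ ·) Z := by
    intro F F'
    refine ⟨F ∪ F', fun z hz => ⟨hz.1, fun c hc c' hc' h =>
      hz.2 c (Finset.mem_union_left _ hc) c' (Finset.mem_union_left _ hc') h⟩,
      fun z hz => ⟨hz.1, fun c hc c' hc' h =>
      hz.2 c (Finset.mem_union_right _ hc) c' (Finset.mem_union_right _ hc') h⟩⟩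
  obtain ⟨z, hz⟩ := IsCompact.nonempty_iInter_of_directed_nonempty_isCompact_isClosed Z
    hdir hne (fun F => (hcl F).isCompact) hcl
  simp only [mem_iInter] at hz
  refine ⟨⟨z, ?_⟩, (hz ∅).1⟩
  intro c c' h
  exact (hz {c, c'}).2 c (by simp) c' (by simp) h

/-- Threads which are eventually given by the sections exist through any finite
initial condition. -/
lemma exists_thread_sec (hseq : IsContInvSeq r) [∀ α, T2Space (X α)]
    [∀ α, CompactSpace (X α)]
    (succ : ι → ι) (hlt : ∀ α, α < succ α) (hsle : ∀ α β, α < β → succ α ≤ β)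
    (sec : ∀ α, X α → X (succ α)) (hseccont : ∀ α, Continuous (sec α))
    (hretr : ∀ α u, r (hlt α).le (sec α u) = u)
    (γ : ι) (x : InvLim r) :
    ∃ z : InvLim r, z.1 γ = x.1 γ ∧ ∀ β, γ ≤ β → z.1 (succ β) = sec β (z.1 β) := by
  haveI := invLim_compactSpace hseq
  have key : ∀ F : Finset ι, ∃ (δ : ι) (hγδ : γ ≤ δ) (t : X δ),
      (∀ β ∈ F, γ ≤ β → succ β ≤ δ) ∧
      (δ = γ ∨ ∃ β ∈ F, γ ≤ β ∧ δ = succ β) ∧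
      r hγδ t = x.1 γ ∧
      (∀ β ∈ F, γ ≤ β → ∀ (h1 : succ β ≤ δ) (h2 : β ≤ δ),
        r h1 t = sec β (r h2 t)) := by
    intro F
    induction F using Finset.strongInduction with
    | _ F ih =>
    by_cases hF : (F.filter (fun β => γ ≤ β)).Nonempty
    · set β' := (F.filter (fun β => γ ≤ β)).max' hF with hβ'def
      have hmax := (F.filter (fun β => γ ≤ β)).max'_mem hF
      have hβ'F : β' ∈ F := Finset.mem_of_mem_filter _ hmax
      have hγβ' : γ ≤ β' := (Finset.mem_filter.mp hmax).2
      obtain ⟨δ', hγδ', t', hub', hform', hbase', hsec'⟩ :=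
        ih (F.erase β') (Finset.erase_ssubset hβ'F)
      have hδ'β' : δ' ≤ β' := by
        rcases hform' with rfl | ⟨β, hβmem, hγβ, rfl⟩
        · exact hγβ'
        · have hβF : β ∈ F := Finset.mem_of_mem_erase hβmem
          have hne : β ≠ β' := Finset.ne_of_mem_erase hβmem
          have hlt' : β < β' := lt_of_le_of_ne
            (Finset.le_max' _ _ (Finset.mem_filter.mpr ⟨hβF, hγβ⟩)) hne
          exact hsle β β' hlt'
      obtain ⟨w, hw⟩ := hseq.surjective hδ'β' t'
      have hδ'δ : δ' ≤ succ β' := hδ'β'.trans (hlt β').le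
      have hkey : r hδ'δ (sec β' w) = t' := by
        have h1 := hseq.map_comp hδ'β' (hlt β').le (sec β' w)
        have h2 : r (hlt β').le (sec β' w) = w := hretr β' w
        rw [h2] at h1
        exact h1.symm.trans hw
      have hproj : ∀ (c : ι) (hc : c ≤ δ'), r (hc.trans hδ'δ) (sec β' w) = r hc t' := by
        intro c hc
        have h1 := hseq.map_comp hc hδ'δ (sec β' w)
        rw [hkey] at h1
        exact h1.symm
      refine ⟨succ β', hγβ'.trans (hlt β').le, sec β' w, ?_, ?_, ?_, ?_⟩
      · intro β hβ hγβ
        by_cases hββ' : β = β'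
        · subst hββ'; exact le_refl _
        · have hmem : β ∈ F.erase β' := Finset.mem_erase.mpr ⟨hββ', hβ⟩
          exact (hub' β hmem hγβ).trans hδ'δ
      · exact Or.inr ⟨β', hβ'F, hγβ', rfl⟩
      · exact (hproj γ hγδ').trans hbase'
      · intro β hβ hγβ h1 h2
        by_cases hββ' : β = β'
        · subst hββ'
          have hA : r h1 (sec β' w) = sec β' w := hseq.map_id _ _
          have hB : sec β' (r h2 (sec β' w)) = sec β' w := congrArg (sec β') (hretr β' w)
          exact hA.trans hB.symm
        · have hmem : β ∈ F.erase β' := Finset.mem_erase.mpr ⟨hββ', hβ⟩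
          have hsuccβδ' : succ β ≤ δ' := hub' β hmem hγβ
          have hA : r h1 (sec β' w) = r hsuccβδ' t' := hproj (succ β) hsuccβδ'
          have hB : r h2 (sec β' w) = r ((hlt β).le.trans hsuccβδ') t' :=
            hproj β ((hlt β).le.trans hsuccβδ')
          exact hA.trans ((hsec' β hmem hγβ hsuccβδ' _).trans (congrArg (sec β) hB.symm))
    · have hempty : ∀ β ∈ F, ¬ γ ≤ β := by
        intro β hβ hγβ
        exact hF ⟨β, Finset.mem_filter.mpr ⟨hβ, hγβ⟩⟩
      exact ⟨γ, le_refl γ, x.1 γ, fun β hβ hγβ => absurd hγβ (hempty β hβ), Or.inl rfl,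
        hseq.map_id _ _, fun β hβ hγβ => absurd hγβ (hempty β hβ)⟩
  set Z : Finset ι → Set (InvLim r) := fun F =>
    {z | z.1 γ = x.1 γ ∧ ∀ β ∈ F, γ ≤ β → z.1 (succ β) = sec β (z.1 β)} with hZdef
  have hne : ∀ F, (Z F).Nonempty := by
    intro F
    obtain ⟨δ, hγδ, t, hub, hform, hbase, hsecs⟩ := key F
    obtain ⟨z, hz⟩ := exists_thread hseq t
    refine ⟨z, ?_, ?_⟩
    · have hth := z.2 hγδ
      rw [hz] at hth
      exact hth.symm.trans hbase
    · intro β hβ hγβ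
      have h1 : succ β ≤ δ := hub β hβ hγβ
      have h2 : β ≤ δ := (hlt β).le.trans h1
      have e1 : z.1 (succ β) = r h1 t := by rw [← hz]; exact (z.2 h1).symm
      have e2 : z.1 β = r h2 t := by rw [← hz]; exact (z.2 h2).symm
      rw [e1, e2]
      exact hsecs β hβ hγβ h1 h2
  have hcl : ∀ F, IsClosed (Z F) := by
    intro F
    have hrw : Z F = {z : InvLim r | z.1 γ = x.1 γ} ∩
        ⋂ (β ∈ F), {z : InvLim r | γ ≤ β → z.1 (succ β) = sec β (z.1 β)} := by
      ext z
      simp only [hZdef, mem_setOf_eq, mem_inter_iff, mem_iInter]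
    rw [hrw]
    refine (isClosed_eq ((continuous_apply γ).comp continuous_subtype_val)
      continuous_const).inter ?_
    refine isClosed_iInter fun β => isClosed_iInter fun _ => ?_
    by_cases hγβ : γ ≤ β
    · have hset : {z : InvLim r | γ ≤ β → z.1 (succ β) = sec β (z.1 β)}
          = {z : InvLim r | z.1 (succ β) = sec β (z.1 β)} := by
        ext z; simp [hγβ]
      rw [hset]
      exact isClosed_eq ((continuous_apply (succ β)).comp continuous_subtype_val)
        ((hseccont β).comp ((continuous_apply β).comp continuous_subtype_val))
    · have hset : {z : InvLim r | γ ≤ β → z.1 (succ β) = sec β (z.1 β)} = univ := by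
        ext z; simp [hγβ]
      rw [hset]; exact isClosed_univ
  have hdir : Directed (· ⊇ ·) Z := by
    intro F F'
    exact ⟨F ∪ F',
      fun z hz => ⟨hz.1, fun β hβ => hz.2 β (Finset.mem_union_left _ hβ)⟩,
      fun z hz => ⟨hz.1, fun β hβ => hz.2 β (Finset.mem_union_right _ hβ)⟩⟩
  obtain ⟨z, hz⟩ := IsCompact.nonempty_iInter_of_directed_nonempty_isCompact_isClosed Z
    hdir hne (fun F => (hcl F).isCompact) hcl
  simp only [mem_iInter] at hz
  exact ⟨z, (hz ∅).1, fun β hγβ => (hz {β}).2 β (Finset.mem_singleton_self β) hγβ⟩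

end ValdiviaAux

/-- The generic form of Statement 11, for an arbitrary well-ordered index type all of
whose initial segments are countable. -/
lemma statement11_aux {ι : Type u} [LinearOrder ι] [WellFoundedLT ι] [Nonempty ι]
    [NoMaxOrder ι] (hcount : ∀ γ : ι, (Set.Iio γ).Countable)
    {X : ι → Type u} [∀ α, TopologicalSpace (X α)] [∀ α, CompactSpace (X α)]
    [∀ α, T2Space (X α)] [∀ α, TopologicalSpace.MetrizableSpace (X α)]
    (r : ∀ ⦃α β : ι⦄, α ≤ β → X β → X α) (hseq : IsContInvSeq r)
    (hsucc : ∀ (α β : ι) (h : α < β), (∀ γ, α < γ → β ≤ γ) → IsRetraction (r h.le)) :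
    IsValdivia (InvLim r) := by
  classical
  haveI := invLim_compactSpace hseq
  -- the successor function
  have hsuccex : ∀ α : ι, ∃ β, α < β ∧ ∀ γ, α < γ → β ≤ γ := by
    intro α
    obtain ⟨β₀, hβ₀⟩ := exists_gt α
    have hS : {β | α < β}.Nonempty := ⟨β₀, hβ₀⟩
    refine ⟨wellFounded_lt.min _ hS, wellFounded_lt.min_mem _ hS, fun γ hγ => ?_⟩
    exact not_lt.mp (wellFounded_lt.not_lt_min _ hγ)
  choose succ hlt hsle using hsuccex
  -- the sections
  have hsecex : ∀ α : ι, ∃ g : X α → X (succ α), Continuous g ∧ r (hlt α).le ∘ g = id :=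
    fun α => (hsucc α (succ α) (hlt α) (hsle α)).2.2
  choose sec hseccont hsecid using hsecex
  have hretr : ∀ α u, r (hlt α).le (sec α u) = u := fun α u => congrFun (hsecid α) u
  -- separating families
  choose sp hspc hsps using fun α : ι => exists_sep_family (X α)
  -- the minimum element
  obtain ⟨α₀, hα₀⟩ : ∃ a : ι, ∀ b, a ≤ b := by
    have hS : (univ : Set ι).Nonempty := univ_nonempty
    exact ⟨wellFounded_lt.min _ hS,
      fun b => not_lt.mp (wellFounded_lt.not_lt_min _ (mem_univ b))⟩
  -- the clamp function onto the unit interval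
  let q : ℝ → unitInterval := fun v => ⟨max (min v 1) 0, le_max_right _ _,
    max_le (min_le_right _ _) zero_le_one⟩
  have hqcont : Continuous q := Continuous.subtype_mk (by fun_prop) _
  have hq0 : q 0 = 0 := by
    apply Subtype.ext
    show max (min (0:ℝ) 1) 0 = 0
    simp
  have hqval : ∀ v : ℝ, v ≤ 1 → (q v : ℝ) = max v 0 := by
    intro v hv; show max (min v 1) 0 = max v 0; rw [min_eq_left hv]
  have idv : ∀ v : ℝ, max v 0 - max (-v) 0 = v := by
    intro v; rcases le_total v 0 with h | h
    · rw [max_eq_right h, max_eq_left (neg_nonneg.mpr h)]; ring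
    · rw [max_eq_left h, max_eq_right (neg_nonpos.mpr h)]; ring
  have hqsep : ∀ v w : ℝ, |v| ≤ 1 → |w| ≤ 1 → q v = q w → q (-v) = q (-w) → v = w := by
    intro v w hv hw h1 h2
    have e1 : max v 0 = max w 0 := by
      have h := congrArg Subtype.val h1
      rwa [hqval v (abs_le.mp hv).2, hqval w (abs_le.mp hw).2] at h
    have e2 : max (-v) 0 = max (-w) 0 := by
      have h := congrArg Subtype.val h2
      rwa [hqval (-v) (by linarith [(abs_le.mp hv).1]),
        hqval (-w) (by linarith [(abs_le.mp hw).1])] at h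
    calc v = max v 0 - max (-v) 0 := (idv v).symm
      _ = max w 0 - max (-w) 0 := by rw [e1, e2]
      _ = w := idv w
  -- the difference functions
  let Fd : ∀ α : ι, ℕ → X (succ α) → ℝ := fun α n y =>
    (sp (succ α) n y : ℝ) - (sp (succ α) n (sec α (r (hlt α).le y)) : ℝ)
  have hFdcont : ∀ α n, Continuous (Fd α n) := by
    intro α n
    apply Continuous.sub
    · exact continuous_subtype_val.comp (hspc (succ α) n)
    · exact continuous_subtype_val.comp ((hspc (succ α) n).comp
        ((hseccont α).comp (hseq.continuous (hlt α).le)))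
  have hFdbd : ∀ α n y, |Fd α n y| ≤ 1 := by
    intro α n y
    have h1 := (sp (succ α) n y).2
    have h2 := (sp (succ α) n (sec α (r (hlt α).le y))).2
    rw [abs_le]
    constructor
    · show -1 ≤ (sp (succ α) n y : ℝ) - _
      linarith [h1.1, h2.2]
    · show (sp (succ α) n y : ℝ) - _ ≤ 1
      linarith [h1.2, h2.1]
  have hFdsec : ∀ α n u, Fd α n (sec α u) = 0 := by
    intro α n u
    show (sp (succ α) n (sec α u) : ℝ)
      - (sp (succ α) n (sec α (r (hlt α).le (sec α u))) : ℝ) = 0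
    rw [hretr α u]
    ring
  -- the embedding
  let T := Option ι × ℕ × Bool
  let hmap : InvLim r → T → unitInterval := fun z t =>
    match t with
    | (none, n, _) => sp α₀ n (z.1 α₀)
    | (some α, n, b) => q (cond b (Fd α n (z.1 (succ α))) (-(Fd α n (z.1 (succ α)))))
  have hcont : Continuous hmap := by
    apply continuous_pi
    rintro ⟨o | α, n, b⟩
    · exact (hspc α₀ n).comp ((continuous_apply α₀).comp continuous_subtype_val)
    · show Continuous fun z : InvLim r =>
        q (cond b (Fd α n (z.1 (succ α))) (-(Fd α n (z.1 (succ α)))))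
      have hbase : Continuous fun z : InvLim r => Fd α n (z.1 (succ α)) :=
        (hFdcont α n).comp ((continuous_apply (succ α)).comp continuous_subtype_val)
      cases b
      · exact hqcont.comp hbase.neg
      · exact hqcont.comp hbase
  have hinj : Function.Injective hmap := by
    intro z w hzw
    by_contra hne
    have hSne : {c | z.1 c ≠ w.1 c}.Nonempty := by
      by_contra h
      rw [not_nonempty_iff_eq_empty] at h
      refine hne (Subtype.ext (funext fun c => ?_))
      by_contra hc
      exact eq_empty_iff_forall_notMem.mp h c hc
    set c := wellFounded_lt.min _ hSne with hcdef
    have hc : z.1 c ≠ w.1 c := wellFounded_lt.min_mem _ hSne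
    have hmin : ∀ d, d < c → z.1 d = w.1 d := by
      intro d hd
      by_contra hd'
      exact wellFounded_lt.not_lt_min _ hd' hd
    by_cases hc0 : ∃ β, c = succ β
    · obtain ⟨β, hcβ⟩ := hc0
      have hβc : β < c := hcβ ▸ hlt β
      have hzwc : z.1 (succ β) ≠ w.1 (succ β) := by rw [← hcβ]; exact hc
      obtain ⟨m, hm⟩ : ∃ m, sp (succ β) m (z.1 (succ β)) ≠ sp (succ β) m (w.1 (succ β)) := by
        by_contra h
        push_neg at h
        exact hzwc (hsps (succ β) _ _ h)
      have hqT : q (Fd β m (z.1 (succ β))) = q (Fd β m (w.1 (succ β))) :=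
        congrFun hzw (some β, m, true)
      have hqF : q (-(Fd β m (z.1 (succ β)))) = q (-(Fd β m (w.1 (succ β)))) :=
        congrFun hzw (some β, m, false)
      have hFdeq := hqsep _ _ (hFdbd β m _) (hFdbd β m _) hqT hqF
      have hcorr : sec β (r (hlt β).le (z.1 (succ β))) = sec β (r (hlt β).le (w.1 (succ β))) := by
        rw [z.2 (hlt β).le, w.2 (hlt β).le, hmin β hβc]
      have heq' : (sp (succ β) m (z.1 (succ β)) : ℝ)
            - (sp (succ β) m (sec β (r (hlt β).le (z.1 (succ β)))) : ℝ)
          = (sp (succ β) m (w.1 (succ β)) : ℝ)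
            - (sp (succ β) m (sec β (r (hlt β).le (w.1 (succ β)))) : ℝ) := hFdeq
      rw [hcorr] at heq'
      exact hm (Subtype.coe_injective (by linarith))
    · by_cases hmin0 : ∀ d, c ≤ d
      · have hcα₀ : c = α₀ := le_antisymm (hmin0 α₀) (hα₀ c)
        have hzw0 : z.1 α₀ = w.1 α₀ :=
          hsps α₀ _ _ (fun n => congrFun hzw (none, n, true))
        apply hc
        rw [hcα₀]
        exact hzw0
      · push_neg at hmin0
        obtain ⟨d, hd⟩ := hmin0
        apply hc
        refine hseq.limit_inj c ⟨d, hd⟩ ?_ _ _ ?_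
        · intro a ha
          refine ⟨succ a, hlt a, lt_of_le_of_ne (hsle a c ha) ?_⟩
          intro h
          exact hc0 ⟨a, h.symm⟩
        · intro a ha
          rw [z.2 ha.le, w.2 ha.le]
          exact hmin a ha
  have hclemb := hcont.isClosedEmbedding hinj
  -- the set of eventually-section threads
  let D : Set (InvLim r) := {z | ∃ γ, ∀ β, γ ≤ β → z.1 (succ β) = sec β (z.1 β)}
  have hDdense : Dense D := by
    rw [dense_iff_inter_open]
    intro U hU hUne
    obtain ⟨x, hx⟩ := hUne
    obtain ⟨V, hV, hVU⟩ := isOpen_induced_iff.mp hU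
    have hxV : x.1 ∈ V := by rw [← hVU] at hx; exact hx
    obtain ⟨I, u, hIu, hpi⟩ := isOpen_pi_iff.mp hV x.1 hxV
    obtain ⟨γ, hγ⟩ : ∃ γ : ι, ∀ a ∈ I, a ≤ γ := by
      rcases I.eq_empty_or_nonempty with rfl | hI
      · exact ⟨α₀, by simp⟩
      · exact ⟨I.max' hI, fun a ha => Finset.le_max' _ _ ha⟩
    obtain ⟨z, hz1, hz2⟩ := exists_thread_sec hseq succ hlt hsle sec hseccont hretr γ x
    refine ⟨z, ?_, γ, hz2⟩
    rw [← hVU]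
    apply hpi
    intro a ha
    have haγ : a ≤ γ := hγ a ha
    have hza : z.1 a = x.1 a := by
      have hz' := z.2 haγ
      have hx' := x.2 haγ
      rw [← hz', ← hx', hz1]
    show z.1 a ∈ u a
    rw [hza]
    exact (hIu a ha).2
  have hsupp : ∀ z ∈ D, hmap z ∈ SigmaProd T := by
    rintro z ⟨γ, hγ⟩
    have hsub : {t : T | hmap z t ≠ 0}
        ⊆ (insert none (some '' Iio γ)) ×ˢ (univ : Set (ℕ × Bool)) := by
      rintro ⟨o, n, b⟩ ht
      cases o with
      | none => exact ⟨mem_insert _ _, mem_univ _⟩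
      | some α =>
        refine ⟨mem_insert_of_mem _ ⟨α, ?_, rfl⟩, mem_univ _⟩
        by_contra hαγ
        have hγα : γ ≤ α := not_lt.mp (by simpa using hαγ)
        apply ht
        show q (cond b (Fd α n (z.1 (succ α))) (-(Fd α n (z.1 (succ α))))) = 0
        have h0 : Fd α n (z.1 (succ α)) = 0 := by
          rw [hγ α hγα]
          exact hFdsec α n (z.1 α)
        rw [h0]
        cases b
        · show q (-(0:ℝ)) = 0
          rw [neg_zero]; exact hq0
        · exact hq0
    exact Countable.mono hsub (Countable.prod
      (Countable.insert _ (Countable.image (hcount γ) _)) countable_univ)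
  refine ⟨T, hmap, hclemb.isEmbedding, Subset.antisymm ?_ ?_⟩
  · rintro y ⟨z, rfl⟩
    have hzcl : z ∈ closure D := hDdense z
    have hmem : hmap z ∈ closure (hmap '' D) :=
      image_closure_subset_closure_image hcont ⟨z, hzcl, rfl⟩
    refine closure_mono ?_ hmem
    rintro y ⟨d, hd, rfl⟩
    exact ⟨mem_range_self d, hsupp d hd⟩
  · have hsub : closure (range hmap ∩ SigmaProd T) ⊆ closure (range hmap) :=
      closure_mono inter_subset_left
    rwa [hclemb.isClosed_range.closure_eq] at hsub


/-- the limit of a continuous inverse sequence indexed by the first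
uncountable ordinal `ω₁`, consisting of compact metrizable spaces and whose
successor bonding maps are retractions, is Valdivia compact. -/
theorem statement11
    {X : (Cardinal.aleph 1 : Cardinal.{u}).ord.ToType → Type u}
    [∀ α, TopologicalSpace (X α)] [∀ α, CompactSpace (X α)] [∀ α, T2Space (X α)]
    [∀ α, TopologicalSpace.MetrizableSpace (X α)]
    (r : ∀ ⦃α β : (Cardinal.aleph 1 : Cardinal.{u}).ord.ToType⦄,
      α ≤ β → X β → X α)
    (hseq : IsContInvSeq r)
    (hsucc : ∀ (α β : (Cardinal.aleph 1 : Cardinal.{u}).ord.ToType) (h : α < β),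
      (∀ γ, α < γ → β ≤ γ) → IsRetraction (r h.le)) :
    IsValdivia (InvLim r) := by
  haveI hnonempty : Nonempty (Cardinal.aleph 1 : Cardinal.{u}).ord.ToType := by
    rw [Ordinal.toType_nonempty_iff_ne_zero]
    have h0 : (0 : Ordinal) < (Cardinal.aleph 1 : Cardinal.{u}).ord := by
      rw [Cardinal.lt_ord]
      simpa using Cardinal.aleph_pos 1
    exact h0.ne'
  haveI := Cardinal.noMaxOrder (Cardinal.aleph0_le_aleph (1 : Ordinal))
  refine statement11_aux ?_ r hseq hsucc
  intro γ
  rw [Cardinal.countable_iff_lt_aleph_one]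
  exact Cardinal.mk_Iio_ord_toType γ
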